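/- arXiv:2409.06014 — 2 statements merged into one kernel-verified Lean document; each statement's English description precedes it below -/
import Mathlib

section
/- Let X be a finite set of n elements with a tournament relation, partitioned into uncorrupted elements U (nonempty, with the relation restricted to U a strict linear order) and k corrupted elements. Let S be any set of min{n, 2k+1} elements of X with the smallest in-degrees (i.e., every element of S has in-degree at most that of every element outside S). Then S contains the maximum element of U. -/
/-- Any set of `min n (2k+1)` elements with the smallest in-degrees contains the
uncorrupted maximum.  (Lemma 2 of the paper.) -/
theorem smallest_indeg_set_contains_max {X : Type*} [Fintype X] [DecidableEq X]
    (beats : X → X → Prop) [DecidableRel beats]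
    (U K : Finset X)
    (hpart : ∀ x : X, (x ∈ U ∧ x ∉ K) ∨ (x ∈ K ∧ x ∉ U))
    (hirr : ∀ v, ¬ beats v v)
    (htour : ∀ u v : X, u ≠ v → Xor' (beats u v) (beats v u))
    (htrans : ∀ a ∈ U, ∀ b ∈ U, ∀ c ∈ U, beats a b → beats b c → beats a c)
    (m : X) (hm : m ∈ U) (hmax : ∀ x ∈ U, x ≠ m → beats m x)
    (S : Finset X)
    (hScard : S.card = min (Fintype.card X) (2 * K.card + 1))
    (hSsmall : ∀ x ∈ S, ∀ y ∉ S,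
      (Finset.univ.filter (fun u => beats u x)).card ≤
        (Finset.univ.filter (fun u => beats u y)).card) :
    m ∈ S := by
  by_contra hmS
  set n := Fintype.card X with hn
  set k := K.card with hk
  -- the in-degree of m is at most k
  have hindegm : (Finset.univ.filter (fun u => beats u m)).card ≤ k := by
    apply Finset.card_le_card
    intro x hx
    simp only [Finset.mem_filter, Finset.mem_univ, true_and] at hx
    rcases hpart x with ⟨hxU, _⟩ | ⟨hxK, _⟩
    · exfalso
      by_cases hxm : x = m
      · exact hirr m (hxm ▸ hx)
      · rcases htour x m hxm with ⟨_, h⟩ | ⟨_, h⟩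
        · exact h (hmax x hxU hxm)
        · exact h hx
    · exact hxK
  set T := insert m S with hT
  have hTcard : T.card = S.card + 1 := Finset.card_insert_of_notMem hmS
  -- every element of T has in-degree at most k
  have hB : ∀ x ∈ T, (Finset.univ.filter (fun u => beats u x)).card ≤ k := by
    intro x hx
    rcases Finset.mem_insert.mp hx with rfl | hxS
    · exact hindegm
    · exact le_trans (hSsmall x hxS m hmS) hindegm
  have hC : ∀ x ∈ T, (T.filter (fun u => beats u x)).card ≤ k := fun x hx =>
    le_trans (Finset.card_le_card
      (Finset.filter_subset_filter _ (Finset.subset_univ T))) (hB x hx)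
  have hsum : ∑ x ∈ T, (T.filter (fun u => beats u x)).card ≤ T.card * k := by
    calc ∑ x ∈ T, (T.filter (fun u => beats u x)).card
        ≤ ∑ _x ∈ T, k := Finset.sum_le_sum hC
      _ = T.card * k := by rw [Finset.sum_const, smul_eq_mul]
  -- double counting
  have h1 : ∑ x ∈ T, (T.filter (fun u => beats u x)).card
      = ∑ p ∈ T.offDiag, (if beats p.2 p.1 then 1 else 0) := by
    rw [show T.offDiag = (T ×ˢ T).filter (fun a => a.1 ≠ a.2) from by
      ext p; simp [Finset.mem_offDiag, and_assoc]]
    rw [Finset.sum_filter]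
    rw [Finset.sum_product]
    apply Finset.sum_congr rfl
    intro x hx
    rw [Finset.card_filter]
    apply Finset.sum_congr rfl
    intro u hu
    by_cases h : x = u
    · subst h; simp [hirr x]
    · simp [h]
  have hswap : ∑ p ∈ T.offDiag, (if beats p.2 p.1 then 1 else 0)
      = ∑ p ∈ T.offDiag, (if beats p.1 p.2 then 1 else 0) := by
    apply Finset.sum_nbij' (fun p => Prod.swap p) (fun p => Prod.swap p) <;>
      simp [Finset.mem_offDiag, and_comm, ne_comm] <;> tauto
  have h2 : 2 * ∑ x ∈ T, (T.filter (fun u => beats u x)).card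
      = T.card * (T.card - 1) := by
    have : 2 * ∑ p ∈ T.offDiag, (if beats p.2 p.1 then 1 else 0)
        = ∑ p ∈ T.offDiag,
            ((if beats p.2 p.1 then 1 else 0) + (if beats p.1 p.2 then 1 else 0)) := by
      rw [Finset.sum_add_distrib, ← hswap]; ring
    rw [h1, this]
    have hone : ∀ p ∈ T.offDiag,
        ((if beats p.2 p.1 then 1 else 0) + (if beats p.1 p.2 then 1 else 0)) = 1 := by
      intro p hp
      obtain ⟨-, -, hne⟩ := Finset.mem_offDiag.mp hp
      rcases htour p.2 p.1 (Ne.symm hne) with ⟨h1', h2'⟩ | ⟨h1', h2'⟩ <;>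
        simp [h1', h2']
    rw [Finset.sum_congr rfl hone, Finset.sum_const, smul_eq_mul, mul_one,
      Finset.offDiag_card]
    cases T.card with
    | zero => simp
    | succ t => rw [Nat.succ_sub_one, Nat.mul_succ, Nat.add_sub_cancel]
  have htk : T.card * (T.card - 1) ≤ T.card * (2 * k) := by
    rw [← h2]
    calc 2 * ∑ x ∈ T, (T.filter (fun u => beats u x)).card
        ≤ 2 * (T.card * k) := by omega
      _ = T.card * (2 * k) := by ring
  have hTpos : 0 < T.card := Finset.card_pos.mpr ⟨m, Finset.mem_insert_self m S⟩
  have hle : T.card - 1 ≤ 2 * k := Nat.le_of_mul_le_mul_left htk hTpos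
  have hTn : T.card ≤ n := Finset.card_le_card (Finset.subset_univ T)
  have hmin : min n (2 * k + 1) = n ∨ min n (2 * k + 1) = 2 * k + 1 :=
    min_choice _ _
  omega
end

section
/- Let X be a finite tournament on n elements with uncorrupted subset U (relation on U transitive) and k corrupted elements, and let m be the uncorrupted maximum with rank r_m (number of elements of X beating m). For any real d ≥ 0, the number of elements x of X with rank r_x ≤ r_m + d is at most 2k + 1 + d. -/
/-- The number of elements whose rank is at most `r_m + d` is at most `2k + 1 + d`,
where `m` is the uncorrupted maximum and `k` the number of corrupted elements. -/
theorem card_low_rank_le {X : Type*} [Fintype X] [DecidableEq X]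
    (beats : X → X → Prop) [DecidableRel beats]
    (U K : Finset X)
    (hpart : ∀ x : X, (x ∈ U ∧ x ∉ K) ∨ (x ∈ K ∧ x ∉ U))
    (hirr : ∀ v, ¬ beats v v)
    (htour : ∀ u v : X, u ≠ v → Xor' (beats u v) (beats v u))
    (htrans : ∀ a ∈ U, ∀ b ∈ U, ∀ c ∈ U, beats a b → beats b c → beats a c)
    (m : X) (hm : m ∈ U) (hmax : ∀ x ∈ U, x ≠ m → beats m x)
    (d : ℝ) (hd : 0 ≤ d) :
    ((Finset.univ.filter (fun x =>
        ((Finset.univ.filter (fun u => beats u x)).card : ℝ) ≤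
          ((Finset.univ.filter (fun u => beats u m)).card : ℝ) + d)).card : ℝ) ≤
      2 * K.card + 1 + d := by
  classical
  have hasym : ∀ a b, beats a b → ¬ beats b a := by
    intro a b hab hba
    have hne : a ≠ b := by rintro rfl; exact hirr a hab
    rcases htour a b hne with ⟨_, h⟩ | ⟨h, _⟩
    · exact h hba
    · exact (htour a b hne).elim (fun p => p.2 hba) (fun p => p.2 hab)
  set rk : X → ℕ := fun x => (Finset.univ.filter (fun u => beats u x)).card with hrk
  set fU : X → ℕ := fun x => (U.filter (fun u => beats u x)).card with hfU
  -- r_m ≤ K.card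
  have hrm : rk m ≤ K.card := by
    apply Finset.card_le_card
    intro u hu
    simp only [Finset.mem_filter] at hu
    rcases hpart u with ⟨hU, _⟩ | ⟨hK, _⟩
    · exfalso
      have hne : u ≠ m := by intro h; rw [h] at hu; exact hirr m hu.2
      exact hasym m u (hmax u hU hne) hu.2
    · exact hK
  -- fU x ≤ rk x
  have hfle : ∀ x, fU x ≤ rk x := by
    intro x
    apply Finset.card_le_card
    intro u hu
    simp only [Finset.mem_filter] at hu ⊢
    exact ⟨Finset.mem_univ u, hu.2⟩
  -- strict monotonicity of fU along beats within U
  have hmono : ∀ x ∈ U, ∀ y ∈ U, beats x y → fU x < fU y := by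
    intro x hx y hy hxy
    have hsub : insert x (U.filter (fun u => beats u x)) ⊆ U.filter (fun u => beats u y) := by
      intro u hu
      rcases Finset.mem_insert.mp hu with rfl | hu
      · exact Finset.mem_filter.mpr ⟨hx, hxy⟩
      · simp only [Finset.mem_filter] at hu ⊢
        exact ⟨hu.1, htrans u hu.1 x hx y hy hu.2 hxy⟩
    have hxnot : x ∉ U.filter (fun u => beats u x) := by
      simp only [Finset.mem_filter]; exact fun h => hirr x h.2
    have := Finset.card_le_card hsub
    rw [Finset.card_insert_of_notMem hxnot] at this
    simp only [hfU]
    omega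
  set S := Finset.univ.filter (fun x =>
        ((Finset.univ.filter (fun u => beats u x)).card : ℝ) ≤
          ((Finset.univ.filter (fun u => beats u m)).card : ℝ) + d) with hS
  set N := K.card + Nat.floor d + 1 with hN
  have hTU : (S.filter (fun x => x ∈ U)).card ≤ N := by
    have := Finset.card_le_card_of_injOn (f := fU)
      (s := S.filter (fun x => x ∈ U)) (t := Finset.range N)
      (by
        intro x hx
        simp only [Finset.mem_coe, Finset.mem_filter, hS] at hx
        have hxr : (rk x : ℝ) ≤ (rk m : ℝ) + d := hx.1.2
        have h1 : (fU x : ℝ) ≤ (K.card : ℝ) + d := by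
          have := hfle x
          have : (fU x : ℝ) ≤ (rk x : ℝ) := by exact_mod_cast this
          have h2 : (rk m : ℝ) ≤ (K.card : ℝ) := by exact_mod_cast hrm
          linarith
        have h3 : fU x ≤ Nat.floor ((K.card : ℝ) + d) := Nat.le_floor h1
        rw [add_comm, Nat.floor_add_natCast hd] at h3
        simp only [Finset.mem_coe, Finset.mem_range, hN]
        omega)
      (by
        intro x hx y hy hxy
        simp only [Finset.mem_coe, Finset.mem_filter] at hx hy
        by_contra hne
        rcases htour x y hne with ⟨h, _⟩ | ⟨h, _⟩
        · exact absurd hxy (Nat.ne_of_lt (hmono x hx.2 y hy.2 h))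
        · exact absurd hxy.symm (Nat.ne_of_lt (hmono y hy.2 x hx.2 h)))
    simpa using this
  have hTK : (S.filter (fun x => ¬ x ∈ U)).card ≤ K.card := by
    apply Finset.card_le_card
    intro x hx
    simp only [Finset.mem_filter] at hx
    rcases hpart x with ⟨hU, _⟩ | ⟨hK, _⟩
    · exact absurd hU hx.2
    · exact hK
  have hsplit : (S.filter (fun x => x ∈ U)).card + (S.filter (fun x => ¬ x ∈ U)).card = S.card :=
    Finset.card_filter_add_card_filter_not _
  have hcard : S.card ≤ N + K.card := by omega
  have hfl : (Nat.floor d : ℝ) ≤ d := Nat.floor_le hd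
  have : (S.card : ℝ) ≤ (N : ℝ) + (K.card : ℝ) := by exact_mod_cast hcard
  simp only [hN] at this
  push_cast at this
  linarith
end
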